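/- Consider the single-item all-pay auction with parameters (B_1, B_2, v_1, v_2) with B_1 ≠ B_2; let s be the player with the larger budget, w the other player, and L = min{B_1, B_2, v_1, v_2}. If v_s = L, then the following profile of mixed strategies is a Nash equilibrium: player s's strategy is the probability measure on [0, L] with an atom of mass (v_w − L)/v_w at 0 and cumulative distribution function F_s(x) = (v_w − L + x)/v_w for x ∈ (0, L]; player w's strategy is the probability measure on [0, L] with cumulative distribution function F_w(x) = x/v_s for x ∈ [0, L] (the uniform distribution on [0, L]). -/

import Mathlib

open MeasureTheory Set

noncomputable section

/-- `L = min {B₁, B₂, v₁, v₂}` for the single-item auction. -/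
def Lval (B v : Fin 2 → ℝ) : ℝ := min (min (B 0) (B 1)) (min (v 0) (v 1))

/-- Probability that player `i` wins the single item when bidding `xi` while the
opponent bids `xo`: the strictly higher bid wins; on a tie at
`min {B₁, B₂, v₁, v₂}` the player with the strictly larger `min {Bᵢ, vᵢ}` wins,
and all other ties are resolved by a fair coin. -/
def winProb (B v : Fin 2 → ℝ) (i : Fin 2) (xi xo : ℝ) : ℝ :=
  if xo < xi then 1
  else if xi < xo then 0
  else if xi = Lval B v ∧ min (B (1 - i)) (v (1 - i)) < min (B i) (v i) then 1
  else if xi = Lval B v ∧ min (B i) (v i) < min (B (1 - i)) (v (1 - i)) then 0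
  else 1 / 2

/-- Expected utility of player `i` from the pure bids `xi` (own) and `xo` (opponent):
he pays his bid in any case and receives `v i` with his winning probability. -/
def payoff (B v : Fin 2 → ℝ) (i : Fin 2) (xi xo : ℝ) : ℝ :=
  winProb B v i xi xo * v i - xi

/-- A mixed strategy of a player with budget `Bi`: a probability measure on `[0, Bi]`. -/
def IsStrategy (Bi : ℝ) (μ : Measure ℝ) : Prop :=
  IsProbabilityMeasure μ ∧ μ (Icc 0 Bi) = 1

/-- Expected utility of player `i` when he plays `μ` and the opponent plays `ν`. -/
def expUtil (B v : Fin 2 → ℝ) (i : Fin 2) (μ ν : Measure ℝ) : ℝ :=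
  ∫ xi, (∫ xo, payoff B v i xi xo ∂ν) ∂μ

/-- `(F 0, F 1)` is a (mixed) Nash equilibrium of the single-item all-pay auction. -/
def IsNash (B v : Fin 2 → ℝ) (F : Fin 2 → Measure ℝ) : Prop :=
  (∀ i, IsStrategy (B i) (F i)) ∧
  ∀ i, ∀ μ, IsStrategy (B i) μ →
    expUtil B v i μ (F (1 - i)) ≤ expUtil B v i (F i) (F (1 - i))

/-- The (topological) support of a mixed strategy. -/
def supp (μ : Measure ℝ) : Set ℝ := {x | ∀ U ∈ nhds x, μ U ≠ 0}

def tieVal (B v : Fin 2 → ℝ) (i : Fin 2) (x : ℝ) : ℝ :=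
  if x = Lval B v ∧ min (B (1 - i)) (v (1 - i)) < min (B i) (v i) then 1
  else if x = Lval B v ∧ min (B i) (v i) < min (B (1 - i)) (v (1 - i)) then 0
  else 1 / 2

lemma payoff_eq (B v : Fin 2 → ℝ) (i : Fin 2) (x xo : ℝ) :
    payoff B v i x xo =
      (Iio x).indicator (fun _ => v i) xo
        + ({x} : Set ℝ).indicator (fun _ => tieVal B v i x * v i) xo - x := by
  unfold payoff winProb tieVal
  rcases lt_trichotomy xo x with h | h | h
  · simp [h, h.ne, not_lt.2 h.le, indicator_of_mem (mem_Iio.2 h)]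
  · subst h
    simp [lt_irrefl]
  · simp [h, h.ne', not_lt.2 h.le, indicator_of_notMem (by simp [mem_Iio, not_lt.2 h.le] : xo ∉ Iio x)]

lemma payoff_integral (B v : Fin 2 → ℝ) (i : Fin 2) (x : ℝ) (ν : Measure ℝ)
    [IsFiniteMeasure ν] :
    ∫ xo, payoff B v i x xo ∂ν
      = (ν (Iio x)).toReal * v i + (ν {x}).toReal * (tieVal B v i x * v i)
        - (ν univ).toReal * x := by
  simp_rw [payoff_eq]
  have h1 : Integrable (fun xo => (Iio x).indicator (fun _ => v i) xo) ν :=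
    (integrable_const (v i)).indicator measurableSet_Iio
  have h2 : Integrable (fun xo => ({x} : Set ℝ).indicator (fun _ => tieVal B v i x * v i) xo) ν :=
    (integrable_const _).indicator (measurableSet_singleton x)
  have h12 : Integrable (fun xo => (Iio x).indicator (fun _ => v i) xo
      + ({x} : Set ℝ).indicator (fun _ => tieVal B v i x * v i) xo) ν := h1.add h2
  rw [integral_sub h12 (integrable_const x), integral_add h1 h2,
    integral_indicator_const _ measurableSet_Iio,
    integral_indicator_const _ (measurableSet_singleton x), integral_const]
  simp [mul_comm, measureReal_def]

lemma vol_Iio_inter_Icc {x L : ℝ} (hx : 0 ≤ x) (hL : 0 ≤ L) :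
    volume (Iio x ∩ Icc 0 L) = ENNReal.ofReal (min x L) := by
  rcases le_or_gt x L with h | h
  · have : Iio x ∩ Icc 0 L = Ico 0 x := by
      ext y; simp only [mem_inter_iff, mem_Iio, mem_Icc, mem_Ico]
      constructor
      · rintro ⟨h1, h2, h3⟩; exact ⟨h2, h1⟩
      · rintro ⟨h1, h2⟩; exact ⟨h2, h1, h2.le.trans h⟩
    rw [this, Real.volume_Ico, min_eq_left h, sub_zero]
  · have : Iio x ∩ Icc 0 L = Icc 0 L := by
      rw [inter_eq_right]
      exact fun y hy => lt_of_le_of_lt hy.2 h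
    rw [this, Real.volume_Icc, min_eq_right h.le, sub_zero]

lemma vol_Iio_inter_Ioc {x L : ℝ} (hx : 0 ≤ x) (hL : 0 ≤ L) :
    volume (Iio x ∩ Ioc 0 L) = ENNReal.ofReal (min x L) := by
  rcases le_or_gt x L with h | h
  · have : Iio x ∩ Ioc 0 L = Ioo 0 x := by
      ext y; simp only [mem_inter_iff, mem_Iio, mem_Ioc, mem_Ioo]
      constructor
      · rintro ⟨h1, h2, h3⟩; exact ⟨h2, h1⟩
      · rintro ⟨h1, h2⟩; exact ⟨h2, h1, h2.le.trans h⟩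
    rw [this, Real.volume_Ioo, min_eq_left h, sub_zero]
  · have : Iio x ∩ Ioc 0 L = Ioc 0 L := by
      rw [inter_eq_right]
      exact fun y hy => lt_of_le_of_lt hy.2 h
    rw [this, Real.volume_Ioc, min_eq_right h.le, sub_zero]

lemma fin2_sub_ne (s : Fin 2) : 1 - s ≠ s := by fin_cases s <;> decide
lemma fin2_sub_sub (s : Fin 2) : 1 - (1 - s) = s := by fin_cases s <;> decide
lemma fin2_cases (i s : Fin 2) : i = s ∨ i = 1 - s := by fin_cases i <;> fin_cases s <;> simp

lemma Lval_le_B (B v : Fin 2 → ℝ) (j : Fin 2) : Lval B v ≤ B j := by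
  fin_cases j
  · exact (min_le_left _ _).trans (min_le_left _ _)
  · exact (min_le_left _ _).trans (min_le_right _ _)

lemma Lval_le_v (B v : Fin 2 → ℝ) (j : Fin 2) : Lval B v ≤ v j := by
  fin_cases j
  · exact (min_le_right _ _).trans (min_le_left _ _)
  · exact (min_le_right _ _).trans (min_le_right _ _)

lemma integral_le_const {ν : Measure ℝ} [IsProbabilityMeasure ν] {g : ℝ → ℝ} {M : ℝ}
    (hM : 0 ≤ M) (h : ∀ᵐ x ∂ν, g x ≤ M) : ∫ x, g x ∂ν ≤ M := by
  by_cases hg : Integrable g ν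
  · calc ∫ x, g x ∂ν ≤ ∫ _, M ∂ν := integral_mono_ae hg (integrable_const M) h
      _ = M := by simp
  · rw [integral_undef hg]; exact hM


/-- With asymmetric budgets and `v_s = L` (where `s` has the larger budget and
`w = 1 - s`), the profile in which player `s` has an atom of mass `(v_w - L)/v_w`
at `0` and cdf `(v_w - L + x)/v_w` on `(0, L]`, and player `w` plays the uniform
distribution on `[0, L]` (cdf `x/v_s`), is a Nash equilibrium. -/
theorem nash_single_item_case2 (B v : Fin 2 → ℝ) (hB : ∀ i, 0 ≤ B i)
    (hv : ∀ i, 0 < v i) (s : Fin 2) (hs : B (1 - s) < B s)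
    (hvs : v s = Lval B v) :
    IsNash B v (fun k =>
      if k = s then
        ENNReal.ofReal ((v (1 - s) - Lval B v) / v (1 - s)) • Measure.dirac (0 : ℝ) +
          ENNReal.ofReal (1 / v (1 - s)) • volume.restrict (Ioc (0 : ℝ) (Lval B v))
      else
        ENNReal.ofReal (1 / v s) • volume.restrict (Icc (0 : ℝ) (Lval B v))) := by
  set L := Lval B v with hLdef
  set w := 1 - s with hwdef
  have hws : w ≠ s := fin2_sub_ne s
  have hsw : 1 - w = s := fin2_sub_sub s
  have hL0 : 0 < L := hvs ▸ hv s
  have hvw : 0 < v w := hv w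
  have hvs0 : 0 < v s := hv s
  have hLvw : L ≤ v w := Lval_le_v B v w
  have hLBw : L ≤ B w := Lval_le_B B v w
  have hLBs : L ≤ B s := Lval_le_B B v s
  have hBs0 : 0 ≤ B s := hB s
  have hdivnn : (0:ℝ) ≤ (v w - L) / v w := div_nonneg (sub_nonneg.2 hLvw) hvw.le
  set μs : Measure ℝ := ENNReal.ofReal ((v w - L) / v w) • Measure.dirac (0 : ℝ) +
      ENNReal.ofReal (1 / v w) • volume.restrict (Ioc (0 : ℝ) L) with hμsdef
  set μw : Measure ℝ := ENNReal.ofReal (1 / v s) • volume.restrict (Icc (0 : ℝ) L) with hμwdef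
  have μw_apply : ∀ A : Set ℝ, MeasurableSet A →
      μw A = ENNReal.ofReal (1 / v s) * volume (A ∩ Icc 0 L) := by
    intro A hA
    rw [hμwdef, Measure.smul_apply, Measure.restrict_apply hA, smul_eq_mul]
  have μs_apply : ∀ A : Set ℝ, MeasurableSet A →
      μs A = ENNReal.ofReal ((v w - L) / v w) * (A.indicator 1 0) +
        ENNReal.ofReal (1 / v w) * volume (A ∩ Ioc 0 L) := by
    intro A hA
    rw [hμsdef, Measure.add_apply, Measure.smul_apply, Measure.smul_apply,
      Measure.restrict_apply hA, Measure.dirac_apply' 0 hA, smul_eq_mul, smul_eq_mul]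
  have hμwA : ∀ A : Set ℝ, MeasurableSet A → Icc (0:ℝ) L ⊆ A → μw A = 1 := by
    intro A hA hsub
    rw [μw_apply A hA, inter_eq_right.2 hsub, Real.volume_Icc, sub_zero, hvs,
      ← ENNReal.ofReal_mul (by positivity)]
    rw [show 1 / L * L = 1 by field_simp, ENNReal.ofReal_one]
  have hμsA : ∀ A : Set ℝ, MeasurableSet A → (0:ℝ) ∈ A → Ioc (0:ℝ) L ⊆ A → μs A = 1 := by
    intro A hA h0 hsub
    rw [μs_apply A hA, indicator_of_mem h0, inter_eq_right.2 hsub, Real.volume_Ioc, sub_zero,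
      Pi.one_apply, mul_one, ← ENNReal.ofReal_mul (by positivity),
      ← ENNReal.ofReal_add hdivnn (by positivity)]
    rw [show (v w - L) / v w + 1 / v w * L = 1 by field_simp; ring, ENNReal.ofReal_one]
  have hμw_prob : IsProbabilityMeasure μw :=
    ⟨hμwA univ MeasurableSet.univ (subset_univ _)⟩
  have hμs_prob : IsProbabilityMeasure μs :=
    ⟨hμsA univ MeasurableSet.univ (mem_univ _) (subset_univ _)⟩
  haveI := hμw_prob
  haveI := hμs_prob
  have conc : ∀ (ν : Measure ℝ) (A : Set ℝ), MeasurableSet A → IsProbabilityMeasure ν →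
      ν A = 1 → ∀ᵐ x ∂ν, x ∈ A := by
    intro ν A hA hp h1
    haveI := hp
    rw [ae_iff]
    have he : {x : ℝ | ¬ x ∈ A} = Aᶜ := rfl
    rw [he, measure_compl hA (measure_ne_top ν A), measure_univ, h1, tsub_self]
  -- inner integral for player s against μw
  have hgs : ∀ x : ℝ, 0 ≤ x → (∫ xo, payoff B v s x xo ∂μw) = min x L - x := by
    intro x hx
    have hmin : 0 ≤ min x L := le_min hx hL0.le
    rw [payoff_integral, μw_apply _ measurableSet_Iio, μw_apply _ (measurableSet_singleton x),
      hμwA univ MeasurableSet.univ (subset_univ _),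
      vol_Iio_inter_Icc hx hL0.le,
      measure_mono_null inter_subset_left Real.volume_singleton, hvs,
      ← ENNReal.ofReal_mul (by positivity)]
    simp only [mul_zero, ENNReal.toReal_ofReal (mul_nonneg (by positivity : (0:ℝ) ≤ 1 / L) hmin),
      ENNReal.toReal_zero, ENNReal.toReal_one, zero_mul, add_zero, one_mul]
    have hc : 1 / L * min x L * L = min x L := by field_simp
    rw [hc]
  -- inner integral for player w against μs, at 0
  have htie : tieVal B v w 0 = 1 / 2 := by
    rw [tieVal, if_neg, if_neg]
    · exact fun h => hL0.ne (h.1.trans hLdef.symm)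
    · exact fun h => hL0.ne (h.1.trans hLdef.symm)
  have hgw0 : (∫ xo, payoff B v w 0 xo ∂μs) = (v w - L) / 2 := by
    rw [payoff_integral, htie, μs_apply _ measurableSet_Iio,
      μs_apply _ (measurableSet_singleton 0),
      hμsA univ MeasurableSet.univ (mem_univ _) (subset_univ _)]
    have h1 : (Iio (0:ℝ)).indicator (1 : ℝ → ENNReal) 0 = 0 := by simp
    have h2 : Iio (0:ℝ) ∩ Ioc 0 L = ∅ := by
      ext y; simp only [mem_inter_iff, mem_Iio, mem_Ioc, mem_empty_iff_false, iff_false]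
      rintro ⟨hy1, hy2, _⟩; linarith
    have h3 : ({(0:ℝ)} : Set ℝ).indicator (1 : ℝ → ENNReal) 0 = 1 := by simp
    have h4 : ({(0:ℝ)} : Set ℝ) ∩ Ioc 0 L = ∅ := by
      ext y; simp only [mem_inter_iff, mem_singleton_iff, mem_Ioc, mem_empty_iff_false, iff_false]
      rintro ⟨rfl, hy2, _⟩; linarith
    rw [h1, h2, h3, h4]
    simp only [measure_empty, mul_zero, mul_one, add_zero, zero_add, mul_zero,
      ENNReal.toReal_zero, zero_mul, ENNReal.toReal_one,
      ENNReal.toReal_ofReal hdivnn]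
    field_simp
    ring
  -- inner integral for player w against μs, at positive x
  have hgwpos : ∀ x : ℝ, 0 < x → (∫ xo, payoff B v w x xo ∂μs) = (v w - L) + min x L - x := by
    intro x hx
    have hmin : 0 ≤ min x L := le_min hx.le hL0.le
    rw [payoff_integral, μs_apply _ measurableSet_Iio, μs_apply _ (measurableSet_singleton x),
      hμsA univ MeasurableSet.univ (mem_univ _) (subset_univ _),
      vol_Iio_inter_Ioc hx.le hL0.le]
    have h1 : (Iio x).indicator (1 : ℝ → ENNReal) 0 = 1 := by
      simp [mem_Iio, hx]
    have h3 : ({x} : Set ℝ).indicator (1 : ℝ → ENNReal) 0 = 0 := by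
      simp [hx.ne]
    rw [h1, h3, mul_one, measure_mono_null inter_subset_left Real.volume_singleton,
      ← ENNReal.ofReal_mul (by positivity),
      ← ENNReal.ofReal_add hdivnn (mul_nonneg (by positivity : (0:ℝ) ≤ 1 / v w) hmin)]
    simp only [mul_zero, add_zero, zero_add, ENNReal.toReal_zero, zero_mul,
      ENNReal.toReal_one, one_mul,
      ENNReal.toReal_ofReal
        (add_nonneg hdivnn (mul_nonneg (by positivity : (0:ℝ) ≤ 1 / v w) hmin))]
    field_simp
    try ring
  -- equilibrium payoffs
  have hEs : expUtil B v s μs μw = 0 := by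
    have hae : ∀ᵐ x ∂μs, x ∈ Icc (0:ℝ) L :=
      conc μs _ measurableSet_Icc hμs_prob
        (hμsA _ measurableSet_Icc (mem_Icc.2 ⟨le_rfl, hL0.le⟩) Ioc_subset_Icc_self)
    have h0 : ∀ᵐ x ∂μs, (∫ xo, payoff B v s x xo ∂μw) = 0 :=
      hae.mono (fun x hx => by rw [hgs x hx.1, min_eq_left hx.2, sub_self])
    show (∫ x, (∫ xo, payoff B v s x xo ∂μw) ∂μs) = 0
    rw [integral_congr_ae h0, integral_zero]
  have hEw : expUtil B v w μw μs = v w - L := by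
    have hμwIoc : μw (Ioc 0 L) = 1 := by
      rw [μw_apply _ measurableSet_Ioc, inter_eq_left.2 Ioc_subset_Icc_self,
        Real.volume_Ioc, sub_zero, hvs, ← ENNReal.ofReal_mul (by positivity)]
      rw [show 1 / L * L = 1 by field_simp, ENNReal.ofReal_one]
    have hae : ∀ᵐ x ∂μw, x ∈ Ioc (0:ℝ) L :=
      conc μw _ measurableSet_Ioc hμw_prob hμwIoc
    have h0 : ∀ᵐ x ∂μw, (∫ xo, payoff B v w x xo ∂μs) = v w - L :=
      hae.mono (fun x hx => by rw [hgwpos x hx.1, min_eq_left hx.2]; ring)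
    show (∫ x, (∫ xo, payoff B v w x xo ∂μs) ∂μw) = v w - L
    rw [integral_congr_ae h0, integral_const, probReal_univ]
    simp
  -- best-response bounds
  have hBRs : ∀ μ : Measure ℝ, IsStrategy (B s) μ → expUtil B v s μ μw ≤ 0 := by
    intro μ hμ
    haveI := hμ.1
    have hae : ∀ᵐ x ∂μ, x ∈ Icc (0:ℝ) (B s) :=
      conc μ _ measurableSet_Icc hμ.1 hμ.2
    exact integral_le_const le_rfl (hae.mono (fun x hx => by
      rw [hgs x hx.1]
      exact sub_nonpos.2 (min_le_left _ _)))
  have hBRw : ∀ μ : Measure ℝ, IsStrategy (B w) μ → expUtil B v w μ μs ≤ v w - L := by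
    intro μ hμ
    haveI := hμ.1
    have hae : ∀ᵐ x ∂μ, x ∈ Icc (0:ℝ) (B w) :=
      conc μ _ measurableSet_Icc hμ.1 hμ.2
    exact integral_le_const (sub_nonneg.2 hLvw) (hae.mono (fun x hx => by
      rcases eq_or_lt_of_le hx.1 with h | h
      · rw [← h, hgw0]; linarith
      · rw [hgwpos x h]
        have := min_le_left x L
        linarith))
  have hF1 : (fun k => if k = s then μs else μw) s = μs := if_pos rfl
  have hF2 : (fun k => if k = s then μs else μw) w = μw := if_neg hws
  refine ⟨?_, ?_⟩
  · intro i
    rcases fin2_cases i s with hi | hi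
    · rw [hi, hF1]
      exact ⟨hμs_prob, hμsA _ measurableSet_Icc (mem_Icc.2 ⟨le_refl 0, hBs0⟩)
        (fun y hy => mem_Icc.2 ⟨hy.1.le, hy.2.trans hLBs⟩)⟩
    · rw [hi, ← hwdef, hF2]
      exact ⟨hμw_prob, hμwA _ measurableSet_Icc (Icc_subset_Icc le_rfl hLBw)⟩
  · intro i μ hμ
    rcases fin2_cases i s with hi | hi
    · rw [hi] at hμ ⊢
      rw [← hwdef, hF1, hF2, hEs]
      exact hBRs μ hμ
    · rw [hi, ← hwdef] at hμ ⊢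
      rw [hsw, hF1, hF2, hEw]
      exact hBRw μ hμ
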